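/- Let P be a finite pure poset and τ an order ideal of P. Define c : P → ℤ by c(u) = −h(u) if u ∈ τ and c(u) = h_P − h(u) if u ∉ τ, and let ℓ : ℤ^P → ℤ be the linear functional ℓ(x) = Σ_{u ∈ P} c(u)·x_u. Then ℓ(δ(e)) = 1 for every edge e ∈ E ∖ E(τ). (Thus the generators δ(e), e ∈ E ∖ E(τ), of the maximal cone σ_τ of the normal fan of Δ(P) all lie on an affine hyperplane at integral distance one from the origin, reflecting the Gorenstein property.) -/

import Mathlib

open scoped Classical

abbrev Phat (P : Type*) := WithBot (WithTop P)

def toHat {P : Type*} (u : P) : Phat P := ((u : WithTop P) : Phat P)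

def chiHat {P : Type*} [DecidableEq P] : Phat P → (P → ℤ) :=
  WithBot.recBotCoe 0 (WithTop.recTopCoe 0 (fun v => Pi.single v 1))

def deltaVec {P : Type*} [DecidableEq P] (e : Phat P × Phat P) : P → ℤ :=
  chiHat e.1 - chiHat e.2

def edgeSet (P : Type*) [PartialOrder P] : Set (Phat P × Phat P) :=
  {e | e.1 ⋖ e.2}

def memHat {P : Type*} (τ : Set P) (a : Phat P) : Prop :=
  a = ⊥ ∨ ∃ u ∈ τ, a = toHat u

def edgeCut {P : Type*} [PartialOrder P] (τ : Set P) : Set (Phat P × Phat P) :=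
  {e ∈ edgeSet P | memHat τ e.1 ∧ ¬ memHat τ e.2}

noncomputable def heightNat {P : Type*} [PartialOrder P] (a : Phat P) : ℕ :=
  (Order.height a).toNat

def IsPurePoset (P : Type*) [PartialOrder P] : Prop :=
  ∀ C₁ C₂ : Set P, IsMaxChain (· ≤ ·) C₁ → IsMaxChain (· ≤ ·) C₂ →
    C₁.ncard = C₂.ncard

set_option linter.unusedSectionVars false

noncomputable instance phatFintype (P : Type*) [Fintype P] : Fintype (Phat P) := by
  unfold Phat WithBot WithTop
  infer_instance

section Aux

variable {α : Type*} [PartialOrder α] [Fintype α]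

lemma myHeight_ne_top (a : α) : Order.height a ≠ ⊤ := by
  intro h
  obtain ⟨p, -, hl⟩ := Order.height_eq_top_iff.mp h (Fintype.card α)
  have := p.length_lt_card
  omega

lemma myHeight_coe (a : α) : ((Order.height a).toNat : ℕ∞) = Order.height a :=
  ENat.coe_toNat (myHeight_ne_top a)

lemma myHeightNat_lt_of_lt {a b : α} (h : a < b) :
    (Order.height a).toNat < (Order.height b).toNat := by
  have h2 := Order.height_strictMono h (lt_top_iff_ne_top.mpr (myHeight_ne_top a))
  rw [← myHeight_coe a, ← myHeight_coe b] at h2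
  exact_mod_cast h2

lemma myHeightNat_le_of_le {a b : α} (h : a ≤ b) :
    (Order.height a).toNat ≤ (Order.height b).toNat := by
  have h2 := Order.height_mono h
  rw [← myHeight_coe a, ← myHeight_coe b] at h2
  exact_mod_cast h2

/-- Convert a covering series to an `LTSeries`. -/
def covToLT (S : RelSeries {(a, b) : α × α | a ⋖ b}) : LTSeries α :=
  ⟨S.length, S.toFun, fun i => (S.step i).lt⟩

lemma covSeries_strictMono (S : RelSeries {(a, b) : α × α | a ⋖ b}) :
    StrictMono S.toFun := (covToLT S).strictMono

lemma ncard_range_covSeries (S : RelSeries {(a, b) : α × α | a ⋖ b}) :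
    (Set.range S.toFun).ncard = S.length + 1 := by
  rw [← Set.image_univ, Set.ncard_image_of_injective _ (covSeries_strictMono S).injective,
    Set.ncard_univ]
  simp

lemma exists_covSeries_bot [OrderBot α] :
    ∀ (n : ℕ) (a : α), (Order.height a).toNat = n →
    ∃ S : RelSeries {(a, b) : α × α | a ⋖ b},
      S.head = ⊥ ∧ S.last = a ∧ S.length = n := by
  intro n
  induction n with
  | zero =>
    intro a ha
    have h0 : Order.height a = 0 := by
      rw [← myHeight_coe a, ha]; rfl
    have hmin : IsMin a := Order.height_eq_zero.mp h0
    have hb : a = ⊥ := le_antisymm (hmin bot_le) bot_le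
    subst hb
    exact ⟨RelSeries.singleton _ ⊥, rfl, rfl, rfl⟩
  | succ n ih =>
    intro a ha
    have hc : Order.height a = (n + 1 : ℕ) := by rw [← myHeight_coe a, ha]
    obtain ⟨p, hlast, hlen⟩ := Order.exists_series_of_height_eq_coe a hc
    have hnn : n < p.length + 1 := by omega
    have hnlast : (⟨n, hnn⟩ : Fin (p.length + 1)) < Fin.last _ := by
      simp [Fin.lt_def, hlen]
    have hba : p.toFun ⟨n, hnn⟩ < a := by
      have := p.strictMono hnlast
      rwa [p.apply_last, hlast] at this
    letI : LocallyFiniteOrder α := Fintype.toLocallyFiniteOrder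
    obtain ⟨a', hba', ha'a⟩ := exists_le_covBy_of_lt hba
    have hhb : (n : ℕ∞) ≤ Order.height (p.toFun ⟨n, hnn⟩) := by
      simpa using Order.index_le_height p ⟨n, hnn⟩
    have hub : n ≤ (Order.height a').toNat := by
      have : (n : ℕ∞) ≤ Order.height a' := hhb.trans (Order.height_mono hba')
      rw [← myHeight_coe a'] at this
      exact_mod_cast this
    have hlb : (Order.height a').toNat < n + 1 := by
      have h1 := myHeightNat_lt_of_lt ha'a.lt
      omega
    obtain ⟨S, hSh, hSl, hSlen⟩ := ih a' (by omega)
    refine ⟨S.snoc a (hSl ▸ ha'a), by simpa using hSh, by simp, ?_⟩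
    show S.length + 0 + 1 = n + 1
    omega

lemma exists_covSeries_top [OrderTop α] :
    ∀ (k : ℕ) (a : α), (Order.height (⊤ : α)).toNat - (Order.height a).toNat ≤ k →
    ∃ T : RelSeries {(a, b) : α × α | a ⋖ b}, T.head = a ∧ T.last = ⊤ := by
  intro k
  induction k with
  | zero =>
    intro a hk
    have hle := myHeightNat_le_of_le (le_top (a := a))
    have : a = ⊤ := by
      by_contra h
      have := myHeightNat_lt_of_lt (lt_top_iff_ne_top.mpr h)
      omega
    subst this
    exact ⟨RelSeries.singleton _ ⊤, rfl, rfl⟩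
  | succ k ih =>
    intro a hk
    by_cases h : a = ⊤
    · subst h; exact ⟨RelSeries.singleton _ ⊤, rfl, rfl⟩
    letI : LocallyFiniteOrder α := Fintype.toLocallyFiniteOrder
    obtain ⟨c, hac, -⟩ := exists_covBy_le_of_lt (lt_top_iff_ne_top.mpr h)
    have h1 := myHeightNat_lt_of_lt hac.lt
    have h2 := myHeightNat_le_of_le (le_top (a := c))
    obtain ⟨T, hTh, hTl⟩ := ih c (by omega)
    exact ⟨T.cons a (hTh ▸ hac), by simp, by simp [hTl]⟩

lemma covSeries_maxChain [BoundedOrder α] (S : RelSeries {(a, b) : α × α | a ⋖ b})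
    (h0 : S.head = ⊥) (h1 : S.last = ⊤) :
    IsMaxChain ((· ≤ ·) : α → α → Prop) (Set.range S.toFun) := by
  have smono := covSeries_strictMono S
  constructor
  · rintro x ⟨i, rfl⟩ y ⟨j, rfl⟩ hne
    rcases lt_trichotomy i j with h | h | h
    · exact Or.inl (smono h).le
    · exact absurd (congrArg S.toFun h) hne
    · exact Or.inr (smono h).le
  · intro t hct hsub
    refine hsub.antisymm ?_
    intro z hz
    by_contra hzr
    have hcomp : ∀ i, S.toFun i < z ∨ z < S.toFun i := by
      intro i
      have hi : S.toFun i ∈ t := hsub ⟨i, rfl⟩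
      have hne : S.toFun i ≠ z := fun h => hzr (h ▸ ⟨i, rfl⟩)
      rcases hct hi hz hne with h | h
      · exact Or.inl (h.lt_of_ne hne)
      · exact Or.inr (h.lt_of_ne (Ne.symm hne))
    classical
    set F : Finset (Fin (S.length + 1)) := Finset.univ.filter (fun i => S.toFun i < z) with hF
    have h0F : (0 : Fin (S.length + 1)) ∈ F := by
      refine Finset.mem_filter.mpr ⟨Finset.mem_univ _, ?_⟩
      rcases hcomp 0 with h | h
      · exact h
      · exact absurd (show z < (⊥ : α) from h0 ▸ h) not_lt_bot
    set i := F.max' ⟨0, h0F⟩ with hi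
    have hiF : i ∈ F := F.max'_mem _
    have hilt : S.toFun i < z := (Finset.mem_filter.mp hiF).2
    have hival : (i : ℕ) < S.length := by
      rcases Nat.lt_or_ge (i : ℕ) S.length with h | h
      · exact h
      · exfalso
        have hieq : i = Fin.last S.length := Fin.ext (by
          have := i.isLt
          simp only [Fin.val_last]
          omega)
        rw [hieq] at hilt
        have ht : S.toFun (Fin.last S.length) = ⊤ := h1
        rw [ht] at hilt
        exact not_top_lt hilt
    have hstep := S.step ⟨(i : ℕ), hival⟩
    have hcs : (Fin.castSucc ⟨(i : ℕ), hival⟩ : Fin (S.length + 1)) = i := Fin.ext rfl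
    rw [hcs] at hstep
    have hsucc : z < S.toFun (Fin.succ ⟨(i : ℕ), hival⟩) := by
      rcases hcomp (Fin.succ ⟨(i : ℕ), hival⟩) with h | h
      · exfalso
        have hmem : Fin.succ ⟨(i : ℕ), hival⟩ ∈ F :=
          Finset.mem_filter.mpr ⟨Finset.mem_univ _, h⟩
        have hle := F.le_max' _ hmem
        rw [← hi] at hle
        simp only [Fin.le_def, Fin.val_succ] at hle
        omega
      · exact h
    exact hstep.2 hilt hsucc

end Aux

section PhatFacts

variable {P : Type*} [PartialOrder P] [Fintype P]

lemma toHat_lt_iff {u v : P} : toHat u < toHat v ↔ u < v := by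
  simp [toHat]

lemma toHat_le_iff {u v : P} : toHat u ≤ toHat v ↔ u ≤ v := by
  simp [toHat]

lemma toHat_injective : Function.Injective (toHat (P := P)) := by
  intro u v h
  simpa [toHat] using h

lemma top_eq_coe : ((⊤ : WithTop P) : Phat P) = (⊤ : Phat P) := rfl

lemma phat_cases (x : Phat P) : x = ⊥ ∨ x = ⊤ ∨ ∃ v, x = toHat v := by
  induction x using WithBot.recBotCoe with
  | bot => exact Or.inl rfl
  | coe y =>
    induction y using WithTop.recTopCoe with
    | top => exact Or.inr (Or.inl rfl)
    | coe v => exact Or.inr (Or.inr ⟨v, rfl⟩)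

lemma bot_ne_top' : (⊥ : Phat P) ≠ ⊤ := by
  intro h
  exact (Option.some_ne_none (⊤ : WithTop P)) (by simpa [top_eq_coe] using h.symm)

lemma toHat_ne_bot (v : P) : toHat v ≠ (⊥ : Phat P) := by simp [toHat]

lemma toHat_ne_top (v : P) : toHat v ≠ (⊤ : Phat P) := by
  intro h
  rw [← top_eq_coe] at h
  have := WithBot.coe_injective h
  simpa using this

lemma proj_chain_eq (S : Set (Phat P)) (hbot : ⊥ ∈ S) (htop : (⊤ : Phat P) ∈ S) :
    S = insert ⊥ (insert ⊤ (toHat '' (toHat ⁻¹' S))) := by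
  apply Set.Subset.antisymm
  · intro x hx
    rcases phat_cases x with h | h | ⟨v, rfl⟩
    · simp [h]
    · simp [h]
    · exact Set.mem_insert_of_mem _ (Set.mem_insert_of_mem _ ⟨v, hx, rfl⟩)
  · intro x hx
    rcases hx with rfl | hx
    · exact hbot
    rcases hx with rfl | ⟨v, hv, rfl⟩
    · exact htop
    · exact hv

lemma proj_maxChain {S : Set (Phat P)} (hS : IsMaxChain (· ≤ ·) S)
    (hbot : ⊥ ∈ S) (htop : (⊤ : Phat P) ∈ S) :
    IsMaxChain ((· ≤ ·) : P → P → Prop) (toHat ⁻¹' S) ∧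
      S.ncard = (toHat ⁻¹' S).ncard + 2 := by
  have hchain : IsChain (· ≤ ·) (toHat ⁻¹' S) := by
    intro u hu v hv hne
    rcases hS.1 hu hv (fun h => hne (toHat_injective h)) with h | h
    · exact Or.inl (toHat_le_iff.mp h)
    · exact Or.inr (toHat_le_iff.mp h)
  refine ⟨⟨hchain, ?_⟩, ?_⟩
  · intro t hct hsub
    refine hsub.antisymm ?_
    intro u hu
    by_contra hnotmem
    have hins : IsChain (· ≤ ·) (insert (toHat u) S) := by
      apply hS.1.insert
      intro x hx hne
      rcases phat_cases x with rfl | rfl | ⟨v, rfl⟩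
      · exact Or.inr bot_le
      · exact Or.inl le_top
      · have hv : v ∈ toHat ⁻¹' S := hx
        have hvu : v ≠ u := fun h => hne (by rw [h])
        rcases hct (hsub hv) hu hvu with h | h
        · exact Or.inr (toHat_le_iff.mpr h)
        · exact Or.inl (toHat_le_iff.mpr h)
    have heq := hS.2 hins (Set.subset_insert _ _)
    exact hnotmem (heq ▸ Set.mem_insert _ _)
  · set A := toHat ⁻¹' S with hA
    have key := proj_chain_eq S hbot htop
    rw [← hA] at key
    rw [key]
    have hfinA : A.Finite := Set.toFinite _
    have h2 : (⊤ : Phat P) ∉ toHat '' A := by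
      rintro ⟨v, -, hv⟩
      exact toHat_ne_top v hv
    have h1 : (⊥ : Phat P) ∉ insert ⊤ (toHat '' A) := by
      rintro (h | ⟨v, -, hv⟩)
      · exact bot_ne_top' h
      · exact toHat_ne_bot v hv
    rw [Set.ncard_insert_of_notMem h1 ((hfinA.image _).insert _),
      Set.ncard_insert_of_notMem h2 (hfinA.image _),
      Set.ncard_image_of_injective _ toHat_injective]

lemma heightNat_covBy (hpure : IsPurePoset P) {a b : Phat P} (hab : a ⋖ b) :
    heightNat b = heightNat a + 1 := by
  obtain ⟨S1, hS1h, hS1l, hS1len⟩ := exists_covSeries_bot (α := Phat P) _ a rfl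
  obtain ⟨S2, hS2h, hS2l, hS2len⟩ := exists_covSeries_bot (α := Phat P) _ b rfl
  obtain ⟨T, hTh, hTl⟩ := exists_covSeries_top (α := Phat P) _ b le_rfl
  let M1 : RelSeries {(a, b) : Phat P × Phat P | a ⋖ b} :=
    (S1.snoc b (hS1l ▸ hab)).smash T (by rw [RelSeries.last_snoc, hTh])
  let M2 : RelSeries {(a, b) : Phat P × Phat P | a ⋖ b} :=
    S2.smash T (hS2l.trans hTh.symm)
  have hM1h : M1.head = ⊥ := by simp [M1, hS1h]
  have hM1l : M1.last = ⊤ := by simp [M1, hTl]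
  have hM2h : M2.head = ⊥ := by simp [M2, hS2h]
  have hM2l : M2.last = ⊤ := by simp [M2, hTl]
  have hM1len : M1.length = S1.length + 0 + 1 + T.length := rfl
  have hM2len : M2.length = S2.length + T.length := rfl
  have hmax1 := covSeries_maxChain M1 hM1h hM1l
  have hmax2 := covSeries_maxChain M2 hM2h hM2l
  have hbot1 : (⊥ : Phat P) ∈ Set.range M1.toFun := ⟨0, hM1h⟩
  have htop1 : (⊤ : Phat P) ∈ Set.range M1.toFun := ⟨Fin.last _, hM1l⟩
  have hbot2 : (⊥ : Phat P) ∈ Set.range M2.toFun := ⟨0, hM2h⟩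
  have htop2 : (⊤ : Phat P) ∈ Set.range M2.toFun := ⟨Fin.last _, hM2l⟩
  obtain ⟨hc1, he1⟩ := proj_maxChain hmax1 hbot1 htop1
  obtain ⟨hc2, he2⟩ := proj_maxChain hmax2 hbot2 htop2
  have hn1 := ncard_range_covSeries M1
  have hn2 := ncard_range_covSeries M2
  have hp := hpure _ _ hc1 hc2
  simp only [heightNat]
  omega

/-- The coefficient functional on `Phat P`. -/
def cval (g : P → ℤ) : Phat P → ℤ := WithBot.recBotCoe 0 (WithTop.recTopCoe 0 g)

lemma cval_bot (g : P → ℤ) : cval g (⊥ : Phat P) = 0 := rfl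

lemma cval_top (g : P → ℤ) : cval g (⊤ : Phat P) = 0 := rfl

lemma cval_toHat (g : P → ℤ) (v : P) : cval g (toHat v) = g v := rfl

lemma sum_mul_chi [DecidableEq P] (g : P → ℤ) (w : Phat P) :
    ∑ u : P, g u * chiHat w u = cval g w := by
  induction w using WithBot.recBotCoe with
  | bot =>
    show ∑ u : P, g u * (0 : ℤ) = (0 : ℤ)
    simp
  | coe y =>
    induction y using WithTop.recTopCoe with
    | top =>
      show ∑ u : P, g u * (0 : ℤ) = (0 : ℤ)
      simp
    | coe v =>
      have h1 : chiHat ((v : WithTop P) : Phat P) = Pi.single v (1 : ℤ) := rfl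
      have h2 : cval g ((v : WithTop P) : Phat P) = g v := rfl
      rw [h1, h2]
      simp [Pi.single_apply, mul_ite, Finset.sum_ite_eq']

end PhatFacts

/-- Let `P` be a finite pure poset and `τ` an order ideal.  With
`c(u) = −h(u)` for `u ∈ τ` and `c(u) = h_P − h(u)` for `u ∉ τ`, the linear functional
`ℓ(x) = ∑_u c(u)·x_u` takes the value `1` on `δ(e)` for every edge `e ∈ E ∖ E(τ)`:
the generators of the maximal cone `σ_τ` of the normal fan of `Δ(P)` lie on an affine
hyperplane at integral distance one from the origin (the Gorenstein property). -/
theorem gorenstein_functional_on_cone (P : Type*) [PartialOrder P] [Fintype P]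
    [DecidableEq P] (hpure : IsPurePoset P) (τ : Set P) (hτ : IsLowerSet τ) :
    ∀ e ∈ edgeSet P, e ∉ edgeCut τ →
      ∑ u : P,
        (if u ∈ τ then -(heightNat (toHat u) : ℤ)
          else (heightNat (⊤ : Phat P) : ℤ) - heightNat (toHat u)) * deltaVec e u
      = 1 := by
  intro e he hcut
  obtain ⟨x, y⟩ := e
  have hxy : x ⋖ y := he
  have himp : memHat τ x → memHat τ y := by
    intro hx
    by_contra hy
    exact hcut ⟨he, hx, hy⟩
  set g : P → ℤ := fun u =>
    if u ∈ τ then -(heightNat (toHat u) : ℤ)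
      else (heightNat (⊤ : Phat P) : ℤ) - heightNat (toHat u) with hg
  have hrw : ∀ u : P,
      (if u ∈ τ then -(heightNat (toHat u) : ℤ)
        else (heightNat (⊤ : Phat P) : ℤ) - heightNat (toHat u)) * deltaVec (x, y) u
      = g u * chiHat x u - g u * chiHat y u := by
    intro u
    simp [hg, deltaVec, mul_sub]
  rw [Finset.sum_congr rfl (fun u _ => hrw u), Finset.sum_sub_distrib,
    sum_mul_chi g x, sum_mul_chi g y]
  have memHat_toHat : ∀ v : P, memHat τ (toHat v) ↔ v ∈ τ := by
    intro v
    constructor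
    · rintro (h | ⟨u, hu, h⟩)
      · exact absurd h (toHat_ne_bot v)
      · rwa [toHat_injective h]
    · intro h
      exact Or.inr ⟨v, h, rfl⟩
  have memHat_top : ¬ memHat τ (⊤ : Phat P) := by
    rintro (h | ⟨u, hu, h⟩)
    · exact bot_ne_top' h.symm
    · exact toHat_ne_top u h.symm
  have hbot0 : heightNat (⊥ : Phat P) = 0 := by
    simp [heightNat]
  rcases phat_cases x with rfl | rfl | ⟨u, rfl⟩
  · -- x = ⊥
    rcases phat_cases y with rfl | rfl | ⟨v, rfl⟩
    · exact absurd hxy.lt (lt_irrefl _)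
    · exact absurd (himp (Or.inl rfl)) memHat_top
    · -- y = toHat v, v ∈ τ
      have hv : v ∈ τ := (memHat_toHat v).mp (himp (Or.inl rfl))
      have hgr := heightNat_covBy hpure hxy
      rw [cval_bot, cval_toHat]
      simp only [hg]
      simp only [if_pos hv]
      rw [hgr, hbot0]
      omega
  · -- x = ⊤ : impossible
    exact absurd hxy.lt (by simp)
  · rcases phat_cases y with rfl | rfl | ⟨v, rfl⟩
    · exact absurd hxy.lt (by simp [toHat])
    · -- y = ⊤
      have hu : u ∉ τ := fun h => memHat_top (himp ((memHat_toHat u).mpr h))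
      have hgr := heightNat_covBy hpure hxy
      rw [cval_top, cval_toHat]
      simp only [hg]
      simp only [if_neg hu]
      rw [hgr]
      omega
    · -- y = toHat v
      have huv : u < v := toHat_lt_iff.mp hxy.lt
      have hgr := heightNat_covBy hpure hxy
      rw [cval_toHat, cval_toHat, hg]
      by_cases hu : u ∈ τ
      · have hv : v ∈ τ := (memHat_toHat v).mp (himp ((memHat_toHat u).mpr hu))
        simp only [if_pos hu, if_pos hv]
        rw [hgr]
        omega
      · have hv : v ∉ τ := fun h => hu (hτ huv.le h)
        simp only [if_neg hu, if_neg hv]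
        rw [hgr]
        omega
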